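/- arXiv:2407.20347 — 4 statements merged into one kernel-verified Lean document; each statement's English description precedes it below -/
import Mathlib

section
/- An element g ∈ GL_n(F_q) has multiplicative order q^n − 1 if and only if g acts transitively on the set of nonzero vectors of F_q^n. -/
open Matrix Polynomial

theorem orderOf_eq_iff_transitive_on_nonzero
    (q n : ℕ) (hn : 1 ≤ n) (F : Type*) [Field F] [Fintype F] (hq : Fintype.card F = q)
    (g : GL (Fin n) F) :
    orderOf g = q ^ n - 1 ↔
      ∀ v w : Fin n → F, v ≠ 0 → w ≠ 0 →
        ∃ k : ℕ, Matrix.mulVec ((g ^ k : GL (Fin n) F) : Matrix (Fin n) (Fin n) F) v = w := by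
  classical
  have hFin : Nonempty (Fin n) := ⟨⟨0, hn⟩⟩
  set M := Matrix (Fin n) (Fin n) F
  set A : M := (g : M) with hA
  have hq2 : 2 ≤ q := hq ▸ Fintype.one_lt_card
  set N : ℕ := q ^ n - 1 with hNdef
  have hqn1 : 1 ≤ q ^ n := Nat.one_le_pow _ _ (by omega)
  have hN1 : N + 1 = q ^ n := by omega
  have hcardV : Fintype.card (Fin n → F) = q ^ n := by
    simp [Fintype.card_fun, hq]
  have horderA : orderOf A = orderOf g := orderOf_units
  have hvalpow : ∀ k : ℕ, ((g ^ k : GL (Fin n) F) : M) = A ^ k := fun k => rfl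
  -- a power of A kills no nonzero vector
  have hker : ∀ (k : ℕ) (v : Fin n → F), (A ^ k).mulVec v = 0 → v = 0 := by
    intro k v hv
    have : ((g⁻¹ ^ k : GL (Fin n) F) : M).mulVec ((A ^ k).mulVec v) = v := by
      rw [mulVec_mulVec]
      have : ((g⁻¹ ^ k : GL (Fin n) F) : M) * A ^ k = ((g⁻¹ ^ k * g ^ k : GL (Fin n) F) : M) := rfl
      rw [this]
      have : (g⁻¹ ^ k * g ^ k : GL (Fin n) F) = 1 := by
        rw [inv_pow, inv_mul_cancel]
      rw [this]
      simp [Matrix.one_mulVec]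
    rw [hv] at this
    simp [Matrix.mulVec_zero] at this
    exact this.symm
  have hpowne : ∀ (k : ℕ) (v : Fin n → F), v ≠ 0 → (A ^ k).mulVec v ≠ 0 :=
    fun k v hv h => hv (hker k v h)
  constructor
  · -- forward
    intro horder v w hv hw
    -- the span of powers of A
    set R₀ : Submodule F M := Submodule.span F (Set.range fun i : Fin n => A ^ (i : ℕ)) with hR₀
    have hpowmem : ∀ k : ℕ, A ^ k ∈ R₀ := by
      intro k
      have h1 := A.pow_eq_aeval_mod_charpoly k
      rw [h1]
      have hdeg : ((X : F[X]) ^ k %ₘ A.charpoly).natDegree < n := by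
        have hne1 : A.charpoly ≠ 1 := by
          intro h
          have h2 := A.charpoly_natDegree_eq_dim
          rw [h, Polynomial.natDegree_one, Fintype.card_fin] at h2
          omega
        have := natDegree_modByMonic_lt ((X : F[X]) ^ k) A.charpoly_monic hne1
        rwa [A.charpoly_natDegree_eq_dim, Fintype.card_fin] at this
      rw [aeval_eq_sum_range' hdeg]
      apply Submodule.sum_mem
      intro i hi
      rw [Finset.mem_range] at hi
      exact Submodule.smul_mem _ _ (Submodule.subset_span ⟨⟨i, hi⟩, rfl⟩)
    have hcardR : Fintype.card R₀ ≤ q ^ n := by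
      have hsurj : Function.Surjective
          (fun c : Fin n → F => (⟨∑ i, c i • A ^ (i : ℕ), Submodule.sum_mem _
            (fun i _ => Submodule.smul_mem _ _ (Submodule.subset_span ⟨i, rfl⟩))⟩ : R₀)) := by
        rintro ⟨x, hx⟩
        obtain ⟨c, hc⟩ := (Finsupp.mem_span_range_iff_exists_finsupp).1 hx
        refine ⟨c, Subtype.ext ?_⟩
        simpa [Finsupp.sum_fintype] using hc
      calc Fintype.card R₀ ≤ Fintype.card (Fin n → F) := Fintype.card_le_of_surjective _ hsurj
        _ = q ^ n := hcardV
    -- the finset of powers together with 0 fills all of R₀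
    set Bfin : Finset M := insert (0 : M) ((Finset.range N).image (A ^ ·)) with hBfin
    have hBcard : Bfin.card = N + 1 := by
      rw [hBfin, Finset.card_insert_of_notMem, Finset.card_image_of_injOn]
      · rw [Finset.card_range]
      · intro i hi j hj hij
        exact pow_injOn_Iio_orderOf (by simpa [horderA, horder] using Finset.mem_range.1 hi)
          (by simpa [horderA, horder] using Finset.mem_range.1 hj) hij
      · simp only [Finset.mem_image]
        rintro ⟨k, -, hk⟩
        have : IsUnit (A ^ k) := by rw [← hvalpow]; exact Units.isUnit _
        rw [hk] at this
        exact this.ne_zero rfl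
    have hBsub : Bfin ⊆ (R₀ : Set M).toFinset := by
      intro x hx
      rw [Set.mem_toFinset]
      rcases Finset.mem_insert.1 hx with h | h
      · rw [h]; exact Submodule.zero_mem _
      · obtain ⟨k, -, hk⟩ := Finset.mem_image.1 h
        rw [← hk]; exact hpowmem k
    have hBeq : Bfin = (R₀ : Set M).toFinset := by
      apply Finset.eq_of_subset_of_card_le hBsub
      rw [Set.toFinset_card, hBcard]
      calc Fintype.card (R₀ : Set M) = Fintype.card R₀ := rfl
        _ ≤ q ^ n := hcardR
        _ = N + 1 := hN1.symm
    have hkey : ∀ a ∈ R₀, a = 0 ∨ ∃ k, a = A ^ k := by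
      intro a ha
      have : a ∈ Bfin := by rw [hBeq, Set.mem_toFinset]; exact ha
      rcases Finset.mem_insert.1 this with h | h
      · exact Or.inl h
      · obtain ⟨k, -, hk⟩ := Finset.mem_image.1 h
        exact Or.inr ⟨k, hk.symm⟩
    -- now the orbit of v
    set Cfin : Finset (Fin n → F) :=
      insert (0 : Fin n → F) ((Finset.range N).image fun k => (A ^ k).mulVec v) with hCfin
    have hCcard : Cfin.card = N + 1 := by
      rw [hCfin, Finset.card_insert_of_notMem, Finset.card_image_of_injOn]
      · rw [Finset.card_range]
      · intro i hi j hj hij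
        have hij' : (A ^ i).mulVec v = (A ^ j).mulVec v := hij
        have hsub : (A ^ i - A ^ j).mulVec v = 0 := by
          rw [Matrix.sub_mulVec, hij', sub_self]
        have hmem : A ^ i - A ^ j ∈ R₀ := Submodule.sub_mem _ (hpowmem i) (hpowmem j)
        rcases hkey _ hmem with h | ⟨k, hk⟩
        · have : A ^ i = A ^ j := by
            have := sub_eq_zero.1 h
            exact this
          exact pow_injOn_Iio_orderOf (by simpa [horderA, horder] using Finset.mem_range.1 hi)
            (by simpa [horderA, horder] using Finset.mem_range.1 hj) this
        · exfalso
          rw [hk] at hsub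
          exact hv (hker k v hsub)
      · simp only [Finset.mem_image]
        rintro ⟨k, -, hk⟩
        exact hpowne k v hv hk
    have hCuniv : Cfin = Finset.univ := by
      apply Finset.eq_univ_of_card
      rw [hCcard, hcardV, hN1]
    have hwC : w ∈ Cfin := by rw [hCuniv]; exact Finset.mem_univ w
    rcases Finset.mem_insert.1 hwC with h | h
    · exact absurd h.symm (hw ∘ Eq.symm)
    · obtain ⟨k, -, hk⟩ := Finset.mem_image.1 h
      exact ⟨k, by rw [hvalpow]; exact hk⟩
  · -- reverse
    intro htrans
    set v₀ : Fin n → F := fun _ => 1 with hv₀def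
    have hv₀ : v₀ ≠ 0 := by
      intro h
      have := congrFun h ⟨0, hn⟩
      simp [hv₀def] at this
    set Mo : ℕ := orderOf g with hMo
    have hMopos : 0 < Mo := orderOf_pos g
    have hcardnz : Fintype.card {w : Fin n → F // w ≠ 0} = N := by
      have h1 : Fintype.card {w : Fin n → F // ¬ (w = 0)} = q ^ n - 1 := by
        rw [Fintype.card_subtype_compl, hcardV, Fintype.card_subtype_eq (0 : Fin n → F)]
      exact h1
    have hNleMo : N ≤ Mo := by
      have hsurj : Function.Surjective
          (fun k : Fin Mo => (⟨(A ^ (k : ℕ)).mulVec v₀, hpowne _ _ hv₀⟩ :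
            {w : Fin n → F // w ≠ 0})) := by
        rintro ⟨w, hw⟩
        obtain ⟨k, hk⟩ := htrans v₀ w hv₀ hw
        rw [hvalpow] at hk
        refine ⟨⟨k % Mo, Nat.mod_lt _ hMopos⟩, Subtype.ext ?_⟩
        have hpm : A ^ (k % Mo) = A ^ k := by
          have h2 := pow_mod_orderOf A k
          rwa [horderA] at h2
        simpa [hpm] using hk
      calc N = Fintype.card {w : Fin n → F // w ≠ 0} := hcardnz.symm
        _ ≤ Fintype.card (Fin Mo) := Fintype.card_le_of_surjective _ hsurj
        _ = Mo := Fintype.card_fin _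
    have hfinish : ∀ a b : ℕ, a < b → b ≤ N →
        (A ^ a).mulVec v₀ = (A ^ b).mulVec v₀ → Mo ≤ N := by
      intro a b hab hbN habeq
      set c : ℕ := b - a with hc
      have hc0 : 0 < c := by omega
      set u : Fin n → F := (A ^ a).mulVec v₀ with hu
      have hune : u ≠ 0 := hpowne _ _ hv₀
      have hfixu : (A ^ c).mulVec u = u := by
        rw [hu, mulVec_mulVec, ← pow_add]
        have : c + a = b := by omega
        rw [this, ← habeq]
      have hfixall : ∀ w : Fin n → F, (A ^ c).mulVec w = w := by
        intro w
        by_cases hw : w = 0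
        · rw [hw, Matrix.mulVec_zero]
        · obtain ⟨k, hk⟩ := htrans u w hune hw
          rw [hvalpow] at hk
          rw [← hk, mulVec_mulVec, ← pow_add, add_comm, pow_add, ← mulVec_mulVec, hfixu]
      have hAc1 : A ^ c = 1 := by
        ext i j
        have h1 := congrFun (hfixall (Pi.single j 1)) i
        rw [Matrix.mulVec_single] at h1
        simp only [Pi.smul_apply, Matrix.col_apply, MulOpposite.op_one, one_smul] at h1
        rw [h1, Matrix.one_apply, Pi.single_apply]
      have hgc1 : g ^ c = 1 := Units.ext (by rw [hvalpow, hAc1]; rfl)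
      have hdvd : Mo ∣ c := orderOf_dvd_of_pow_eq_one hgc1
      calc Mo ≤ c := Nat.le_of_dvd hc0 hdvd
        _ ≤ N := by omega
    -- pigeonhole to find a small period
    obtain ⟨i, j, hij, heq⟩ := Fintype.exists_ne_map_eq_of_card_lt
      (fun k : Fin (N + 1) => (⟨(A ^ (k : ℕ)).mulVec v₀, hpowne _ _ hv₀⟩ :
        {w : Fin n → F // w ≠ 0})) (by rw [Fintype.card_fin, hcardnz]; omega)
    have heq' : (A ^ (i : ℕ)).mulVec v₀ = (A ^ (j : ℕ)).mulVec v₀ := by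
      exact congrArg Subtype.val heq
    -- wlog i < j
    rcases lt_or_gt_of_ne (fun h => hij (Fin.ext h) : (i : ℕ) ≠ (j : ℕ)) with hlt | hlt
    · exact le_antisymm (hfinish _ _ hlt (by omega) heq') hNleMo
    · exact le_antisymm (hfinish _ _ hlt (by omega) heq'.symm) hNleMo
end

section
/- If g ∈ GL_n(F_q) has multiplicative order q^n − 1, then the characteristic polynomial of g is irreducible over F_q. -/
set_option maxHeartbeats 1000000

open Matrix Polynomial

theorem singer_cycle_charpoly_irreducible
    (q n : ℕ) (hn : 1 ≤ n) (F : Type*) [Field F] [Fintype F] (hq : Fintype.card F = q)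
    (g : GL (Fin n) F) (hg : orderOf g = q ^ n - 1) :
    Irreducible (Matrix.charpoly (g : Matrix (Fin n) (Fin n) F)) := by
  haveI : NeZero n := ⟨by omega⟩
  set M : Matrix (Fin n) (Fin n) F := (g : Matrix (Fin n) (Fin n) F) with hMdef
  haveI : Nontrivial (Matrix (Fin n) (Fin n) F) := inferInstance
  have hMint : IsIntegral F M := IsIntegral.of_finite F M
  set A := Algebra.adjoin F ({M} : Set (Matrix (Fin n) (Fin n) F)) with hA
  have hq2 : 2 ≤ q := hq ▸ Fintype.one_lt_card
  have hdeg_char : (Matrix.charpoly M).natDegree = n := by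
    simp [M.charpoly_natDegree_eq_dim]
  have hd_le : (minpoly F M).natDegree ≤ n := by
    have := Polynomial.natDegree_le_of_dvd (Matrix.minpoly_dvd_charpoly M)
      (Matrix.charpoly_monic M).ne_zero
    omega
  have hd_pos : 0 < (minpoly F M).natDegree := minpoly.natDegree_pos hMint
  set d := (minpoly F M).natDegree with hddef
  have hμmonic : (minpoly F M).Monic := minpoly.monic hMint
  -- the "coefficient tuple" parametrization of A
  set f : (Fin d → F) → Matrix (Fin n) (Fin n) F :=
    fun c => ∑ i : Fin d, c i • M ^ (i : ℕ) with hf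
  have hrange : ∀ p : Polynomial F, (Polynomial.aeval M) p ∈ Set.range f := by
    intro p
    set r := p %ₘ (minpoly F M) with hr
    have hpr : (Polynomial.aeval M) p = (Polynomial.aeval M) r := by
      rw [hr, Polynomial.aeval_modByMonic_eq_self_of_root (minpoly.aeval F M)]
    have hrd : r.natDegree < d := by
      rcases eq_or_ne r 0 with h0 | h0
      · simpa [h0] using hd_pos
      · exact (Polynomial.natDegree_lt_natDegree_iff h0).mpr
          (Polynomial.degree_modByMonic_lt p hμmonic)
    refine ⟨fun i => r.coeff (i : ℕ), ?_⟩
    show (∑ i : Fin d, r.coeff (i : ℕ) • M ^ (i : ℕ)) = _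
    rw [hpr, Polynomial.aeval_eq_sum_range' hrd]
    exact Fin.sum_univ_eq_sum_range (fun i => r.coeff i • M ^ i) d
  have hmemM : M ∈ A := Algebra.self_mem_adjoin_singleton F M
  have hpowmem : ∀ k : ℕ, M ^ k ∈ A := fun k => pow_mem hmemM k
  have hAsub : (A : Set (Matrix (Fin n) (Fin n) F)) ⊆ Set.range f := by
    intro x hx
    rw [hA, Algebra.adjoin_singleton_eq_range_aeval] at hx
    obtain ⟨p, rfl⟩ := hx
    exact hrange p
  -- injectivity of powers of M below the order of g
  have hinj : Set.InjOn (fun k : ℕ => M ^ k) (Set.Iio (q ^ n - 1)) := by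
    intro i hi j hj hij
    have hgij : g ^ i = g ^ j := by
      apply Units.ext
      simpa [Units.val_pow_eq_pow_val] using hij
    exact pow_injOn_Iio_orderOf (x := g) (by simpa [hg] using hi)
      (by simpa [hg] using hj) hgij
  have hpow_ne : ∀ k : ℕ, M ^ k ≠ 0 := by
    intro k hk
    have : ((g ^ k : GL (Fin n) F) : Matrix (Fin n) (Fin n) F) = 0 := by
      simpa [Units.val_pow_eq_pow_val] using hk
    exact Units.ne_zero (g ^ k) this
  -- the set of powers of M together with 0
  set T : Set (Matrix (Fin n) (Fin n) F) :=
    insert 0 ((fun k : ℕ => M ^ k) '' (Set.Iio (q ^ n - 1))) with hT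
  have hTsub : T ⊆ (A : Set (Matrix (Fin n) (Fin n) F)) := by
    rintro x (rfl | ⟨k, -, rfl⟩)
    · exact zero_mem A
    · exact hpowmem k
  have hTcard : T.ncard = q ^ n := by
    rw [hT, Set.ncard_insert_of_notMem, Set.ncard_image_of_injOn hinj]
    · have h1 : (Set.Iio (q ^ n - 1)).ncard = q ^ n - 1 := by
        rw [← Nat.card_coe_set_eq, Nat.card_eq_fintype_card, Fintype.card_Iio, Nat.card_Iio]
      have h2 : 1 ≤ q ^ n := Nat.one_le_pow _ _ (by omega)
      omega
    · rintro ⟨k, -, hk⟩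
      exact hpow_ne k hk
  have hrange_fin : (Set.range f).Finite := Set.finite_range f
  have hScard : (Set.range f).ncard ≤ q ^ d := by
    have h1 : Set.range f = f '' Set.univ := (Set.image_univ).symm
    rw [h1]
    have h2 := Set.ncard_image_le (f := f) (s := (Set.univ : Set (Fin d → F)))
      Set.finite_univ
    rw [Set.ncard_univ, Nat.card_eq_fintype_card, Fintype.card_fun, hq,
      Fintype.card_fin] at h2
    exact h2
  -- comparing cardinalities: d = n
  have hTA : T.ncard ≤ (Set.range f).ncard :=
    Set.ncard_le_ncard (hTsub.trans hAsub) hrange_fin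
  have hd_ge : n ≤ d := by
    by_contra h
    push_neg at h
    have h1 : q ^ n ≤ q ^ d := by omega
    have := (Nat.pow_lt_pow_iff_right (by omega : 1 < q)).mpr h
    omega
  have hd : d = n := le_antisymm hd_le hd_ge
  -- T = A as sets
  have hTeq : T = (A : Set (Matrix (Fin n) (Fin n) F)) := by
    apply Set.eq_of_subset_of_ncard_le hTsub _ (hrange_fin.subset hAsub)
    calc (A : Set (Matrix (Fin n) (Fin n) F)).ncard
        ≤ (Set.range f).ncard := Set.ncard_le_ncard hAsub hrange_fin
      _ ≤ q ^ d := hScard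
      _ = T.ncard := by rw [hd, hTcard]
  -- A is a finite domain
  haveI : Nontrivial A := ⟨⟨1, 0, fun h => one_ne_zero (congrArg Subtype.val h)⟩⟩
  haveI : NoZeroDivisors A := by
    constructor
    intro a b hab
    by_contra hcon
    push_neg at hcon
    obtain ⟨ha, hb⟩ := hcon
    have haT : (a : Matrix (Fin n) (Fin n) F) ∈ T := hTeq ▸ a.2
    have hbT : (b : Matrix (Fin n) (Fin n) F) ∈ T := hTeq ▸ b.2
    rcases haT with h0 | ⟨i, -, hi⟩
    · exact ha (Subtype.ext h0)
    rcases hbT with h0 | ⟨j, -, hj⟩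
    · exact hb (Subtype.ext h0)
    have hprod : (a : Matrix (Fin n) (Fin n) F) * b = M ^ (i + j) := by
      rw [← hi, ← hj, pow_add]
    have h0 : (a : Matrix (Fin n) (Fin n) F) * b = 0 := by
      simpa using congrArg Subtype.val hab
    exact hpow_ne (i + j) (by rw [← hprod, h0])
  haveI : IsDomain A := NoZeroDivisors.to_isDomain A
  -- minpoly of M is irreducible
  have hx : (minpoly F (⟨M, hmemM⟩ : A)) = minpoly F M := by
    have := minpoly.algHom_eq (A.val) Subtype.val_injective (⟨M, hmemM⟩ : A)
    simpa using this.symm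
  have hxint : IsIntegral F (⟨M, hmemM⟩ : A) := IsIntegral.of_finite F _
  have hirr : Irreducible (minpoly F M) := hx ▸ minpoly.irreducible hxint
  -- charpoly = minpoly
  have heq : Matrix.charpoly M = minpoly F M := by
    obtain ⟨c, hc⟩ := Matrix.minpoly_dvd_charpoly M
    have hcm : (Matrix.charpoly M).Monic := Matrix.charpoly_monic M
    have hcne : c ≠ 0 := by
      rintro rfl
      simp at hc
      exact hcm.ne_zero hc
    have hdc : c.natDegree = 0 := by
      have := congrArg Polynomial.natDegree hc
      rw [Polynomial.natDegree_mul (hμmonic.ne_zero) hcne, hdeg_char] at this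
      omega
    have hclead : c.leadingCoeff = 1 := by
      have h2 := hcm
      rw [hc] at h2
      have h3 := h2.leadingCoeff
      rwa [Polynomial.leadingCoeff_mul, hμmonic.leadingCoeff, one_mul] at h3
    have hc1 : c = 1 := by
      rw [Polynomial.eq_C_of_natDegree_eq_zero hdc]
      rw [Polynomial.eq_C_of_natDegree_eq_zero hdc] at hclead
      simp at hclead
      rw [hclead]
      simp
    rw [hc, hc1, mul_one]
  rw [heq]
  exact hirr
end

section
/- If g ∈ GL_n(F_q) has multiplicative order q^n − 1, then det(g) is a generator of the cyclic group F_q^×. -/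
set_option maxHeartbeats 1000000

open Matrix Polynomial

theorem singer_cycle_det_generates
    (q n : ℕ) (hn : 1 ≤ n) (F : Type*) [Field F] [Fintype F] (hq : Fintype.card F = q)
    (g : GL (Fin n) F) (hg : orderOf g = q ^ n - 1) :
    ∀ u : Fˣ, u ∈ Subgroup.zpowers (Matrix.GeneralLinearGroup.det g) := by
  classical
  have hq2 : 2 ≤ q := hq ▸ Fintype.one_lt_card
  set k := q ^ n - 1 with hk_def
  have hqn : 2 ≤ q ^ n := le_trans hq2 (Nat.le_self_pow (by omega) q)
  have hk1 : 1 ≤ k := by omega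
  set M : Matrix (Fin n) (Fin n) F := (g : Matrix (Fin n) (Fin n) F) with hM_def
  have hgk : g ^ k = 1 := hg ▸ pow_orderOf_eq_one g
  have hMk : M ^ k = 1 := by
    have := congrArg Units.val hgk
    simpa [Units.val_pow_eq_pow_val] using this
  haveI : Nonempty (Fin n) := ⟨⟨0, by omega⟩⟩
  have hint : IsIntegral F M := ⟨X ^ k - 1, monic_X_pow_sub_C 1 (by omega), by
    simp [eval₂, hMk]⟩
  set p : F[X] := minpoly F M with hp_def
  have hpmonic : p.Monic := minpoly.monic hint
  have hpne : p ≠ 0 := hpmonic.ne_zero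
  have hpdvd : p ∣ X ^ k - C 1 := minpoly.dvd F M (by
    simp [map_pow, hMk])
  have hpdeg_le : p.natDegree ≤ n := by
    have h1 : p ∣ M.charpoly := minpoly.dvd F M (Matrix.aeval_self_charpoly M)
    have := Polynomial.natDegree_le_of_dvd h1 (Matrix.charpoly_monic M).ne_zero
    simpa [Matrix.charpoly_natDegree_eq_dim] using this
  have hpdeg_pos : 0 < p.natDegree := minpoly.natDegree_pos hint
  -- the adjoin-root algebra
  set A := AdjoinRoot p with hA_def
  haveI : Nontrivial A := AdjoinRoot.nontrivial p (by
    rw [Polynomial.degree_eq_natDegree hpne]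
    simp only [ne_eq, Nat.cast_eq_zero]
    omega)
  set x : A := AdjoinRoot.root p with hx_def
  have hxp : (aeval x) p = 0 := by
    have := AdjoinRoot.eval₂_root p
    rwa [← AdjoinRoot.algebraMap_eq, ← aeval_def] at this
  have hzero : ∀ f ∈ Ideal.span {p}, (Polynomial.aeval M).toRingHom f = (0 : Matrix (Fin n) (Fin n) F) := by
    intro f hf
    rw [Ideal.mem_span_singleton] at hf
    obtain ⟨c, rfl⟩ := hf
    simp [show (aeval M) p = 0 from minpoly.aeval F M]
  set ψ : A →+* Matrix (Fin n) (Fin n) F :=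
    Ideal.Quotient.lift (Ideal.span {p}) (Polynomial.aeval M).toRingHom hzero with hψ_def
  have hψmk : ∀ f : F[X], ψ (AdjoinRoot.mk p f) = aeval M f := by
    intro f
    exact Ideal.Quotient.lift_mk _ _ _
  have hψx : ψ x = M := by
    have : x = AdjoinRoot.mk p X := rfl
    rw [this, hψmk]
    simp
  have hψinj : Function.Injective ψ := by
    intro a b hab
    obtain ⟨f, rfl⟩ := AdjoinRoot.mk_surjective a
    obtain ⟨f', rfl⟩ := AdjoinRoot.mk_surjective b
    rw [AdjoinRoot.mk_eq_mk]
    have : (aeval M) (f - f') = 0 := by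
      have h1 : ψ (AdjoinRoot.mk p f) = aeval M f := hψmk f
      have h2 : ψ (AdjoinRoot.mk p f') = aeval M f' := hψmk f'
      rw [map_sub]
      rw [h1, h2] at hab
      simp [hab]
    exact minpoly.dvd F M this
  -- finiteness and cardinality of A
  haveI : Fintype A := Module.fintypeOfFintype (AdjoinRoot.powerBasis hpne).basis
  have hcardA : Fintype.card A = q ^ p.natDegree := by
    rw [Module.card_fintype (AdjoinRoot.powerBasis hpne).basis, hq, Fintype.card_fin,
      AdjoinRoot.powerBasis_dim hpne]
  -- x is a unit of order k
  have hxk : x ^ k = 1 := by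
    apply hψinj
    rw [map_pow, hψx, hMk, _root_.map_one]
  have hxu : IsUnit x := IsUnit.of_pow_eq_one hxk (by omega)
  set u0 : Aˣ := hxu.unit with hu0_def
  have hu0val : (u0 : A) = x := rfl
  have hord : orderOf u0 = k := by
    apply Nat.dvd_antisymm
    · exact orderOf_dvd_of_pow_eq_one (by ext; simp [hu0val, hxk])
    · have h0 : 0 < orderOf u0 := orderOf_pos u0
      apply (hg ▸ orderOf_dvd_of_pow_eq_one (G := GL (Fin n) F) (n := orderOf u0) ?_)
      have hxo : x ^ orderOf u0 = 1 := by
        have := pow_orderOf_eq_one u0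
        have := congrArg Units.val this
        rwa [Units.val_pow_eq_pow_val, hu0val, Units.val_one] at this
      have : M ^ orderOf u0 = 1 := by
        rw [← hψx, ← map_pow, hxo, _root_.map_one]
      exact Units.ext (by simpa [Units.val_pow_eq_pow_val] using this)
  -- degree must be n
  have hdeg : p.natDegree = n := by
    have h1 : k ≤ Fintype.card Aˣ := hord ▸ orderOf_le_card_univ
    have h2 : Fintype.card Aˣ < Fintype.card A := card_units_lt A
    have : q ^ n ≤ q ^ p.natDegree := by omega
    have := (pow_le_pow_iff_right₀ (by omega : 1 < q)).mp this
    omega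
  have hcardA' : Fintype.card A = q ^ n := by rw [hcardA, hdeg]
  have hcardU : Fintype.card Aˣ = k := by
    have h1 : k ≤ Fintype.card Aˣ := hord ▸ orderOf_le_card_univ
    have h2 : Fintype.card Aˣ < Fintype.card A := card_units_lt A
    omega
  -- A is a domain
  have hunit : ∀ a : A, a ≠ 0 → IsUnit a := by
    intro a ha
    classical
    set U : Finset A := Finset.univ.image (fun u : Aˣ => (u : A)) with hU_def
    have hcardU' : U.card = k := by
      rw [hU_def, Finset.card_image_of_injective _ Units.val_injective, Finset.card_univ, hcardU]
    have h0 : (0 : A) ∉ U := by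
      rw [hU_def]
      simp only [Finset.mem_image, Finset.mem_univ, true_and, not_exists]
      intro u
      exact fun h => Units.ne_zero u h
    have hins : (insert (0:A) U).card = Fintype.card A := by
      rw [Finset.card_insert_of_notMem h0, hcardU', hcardA']
      omega
    have huniv : insert (0:A) U = Finset.univ := Finset.eq_univ_of_card _ hins
    have hmem : a ∈ insert (0:A) U := by rw [huniv]; exact Finset.mem_univ a
    rcases Finset.mem_insert.mp hmem with h | h
    · exact absurd h ha
    · obtain ⟨u, _, hu⟩ := Finset.mem_image.mp h
      exact ⟨u, hu⟩
  haveI : NoZeroDivisors A := ⟨by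
    intro a b hab
    by_cases ha : a = 0
    · exact Or.inl ha
    · right
      obtain ⟨u, hu⟩ := hunit a ha
      have : (↑u⁻¹ : A) * (a * b) = b := by
        rw [← hu, ← mul_assoc, Units.inv_mul, one_mul]
      rw [hab, mul_zero] at this
      exact this.symm⟩
  haveI : IsDomain A := NoZeroDivisors.to_isDomain A
  -- Frobenius roots
  have hfrob : ∀ a : A, (aeval a) p = 0 → (aeval (a ^ q)) p = 0 := by
    haveI : CharP F (ringChar F) := ringChar.charP F
    obtain ⟨m, hpcprime, hcard⟩ := FiniteField.card F (ringChar F)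
    haveI : Fact (ringChar F).Prime := ⟨hpcprime⟩
    haveI : CharP A (ringChar F) :=
      charP_of_injective_algebraMap (algebraMap F A).injective (ringChar F)
    haveI : ExpChar A (ringChar F) := ExpChar.prime hpcprime
    have hqm : q = (ringChar F) ^ (m : ℕ) := by rw [← hq, hcard]
    intro a ha
    set φ₀ : A →+* A := iterateFrobenius A (ringChar F) m with hφ₀_def
    have hφq : ∀ y : A, φ₀ y = y ^ q := by
      intro y
      rw [hφ₀_def, iterateFrobenius_def, ← hqm]
    have hcomm : ∀ c : F, φ₀ (algebraMap F A c) = algebraMap F A c := by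
      intro c
      rw [hφq, ← map_pow]
      congr 1
      rw [← hq]
      exact FiniteField.pow_card c
    let φ : A →ₐ[F] A := { toRingHom := φ₀, commutes' := hcomm }
    have h1 := Polynomial.aeval_algHom_apply φ a p
    rw [ha, map_zero] at h1
    have hφa : φ a = a ^ q := hφq a
    rwa [hφa] at h1
  have hroots : ∀ i : ℕ, (aeval (x ^ q ^ i)) p = 0 := by
    intro i
    induction i with
    | zero => simpa using hxp
    | succ i ih =>
        have := hfrob _ ih
        rwa [← pow_mul, ← pow_succ] at this
  -- the polynomial is the product of the conjugate roots
  set s : ℕ := ∑ i ∈ Finset.range n, q ^ i with hs_def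
  have hgeom : (q - 1) * s = q ^ n - 1 := by
    have hz := geom_sum_mul (q : ℤ) n
    have h1 : 1 ≤ q ^ n := by omega
    rw [hs_def]
    zify [h1, (by omega : 1 ≤ q)]
    push_cast
    rw [mul_comm]
    exact hz
  have hcoeff : algebraMap F A (p.coeff 0) = (-1) ^ n * x ^ s := by
    classical
    set P : Polynomial A := p.map (algebraMap F A) with hP_def
    have hPmonic : P.Monic := hpmonic.map _
    have hPdeg : P.natDegree = n := by rw [hP_def, hpmonic.natDegree_map, hdeg]
    have hPne : P ≠ 0 := hPmonic.ne_zero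
    have hrootP : ∀ i : ℕ, P.IsRoot (x ^ q ^ i) := by
      intro i
      have h2 := hroots i
      rw [aeval_def, ← Polynomial.eval_map] at h2
      exact h2
    set r : Fin n → A := fun i => x ^ q ^ (i : ℕ) with hr_def
    have hu0pow : ∀ m : ℕ, ((u0 ^ m : Aˣ) : A) = (x ^ m : A) := fun m => by
      rw [Units.val_pow_eq_pow_val, hu0val]
    have hrinj : Function.Injective r := by
      have key : ∀ i j : Fin n, (i:ℕ) < (j:ℕ) → r i ≠ r j := by
        intro i j hlt hij
        have h5 : (u0 : Aˣ) ^ (q ^ (i:ℕ)) = u0 ^ (q ^ (j:ℕ)) := Units.ext (by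
          rw [hu0pow, hu0pow]; exact hij)
        rw [pow_eq_pow_iff_modEq, hord] at h5
        have hdvd' : (k:ℤ) ∣ ((q^(j:ℕ) : ℕ) : ℤ) - ((q^(i:ℕ) : ℕ) : ℤ) := h5.dvd
        have hlt1 : q^(i:ℕ) < q^(j:ℕ) := Nat.pow_lt_pow_right (by omega) hlt
        have hle : q^(j:ℕ) ≤ q^(n-1) := Nat.pow_le_pow_right (by omega) (by omega)
        have h2 : q ^ (n-1) * 2 ≤ q ^ (n-1) * q := Nat.mul_le_mul_left _ hq2
        have h3 : q ^ (n-1) * q = q ^ n := by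
          rw [← pow_succ]
          congr 1
          omega
        have h4 : 1 ≤ q ^ (i:ℕ) := Nat.one_le_pow _ _ (by omega)
        have hkd : (k:ℤ) ≤ ((q^(j:ℕ) : ℕ) : ℤ) - ((q^(i:ℕ) : ℕ) : ℤ) :=
          Int.le_of_dvd (by omega) hdvd'
        have hkq : k = q ^ n - 1 := hk_def
        omega
      intro i j hij
      rcases Nat.lt_trichotomy (i:ℕ) (j:ℕ) with h | h | h
      · exact absurd hij (key i j h)
      · exact Fin.ext h
      · exact absurd hij.symm (key j i h)
    set t : Finset A := Finset.univ.image r with ht_def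
    have htcard : t.card = n := by
      rw [ht_def, Finset.card_image_of_injective _ hrinj, Finset.card_univ, Fintype.card_fin]
    have htsub : t.val ≤ P.roots := by
      rw [Multiset.le_iff_subset t.nodup]
      intro a ha
      rw [Finset.mem_val, ht_def, Finset.mem_image] at ha
      obtain ⟨i, _, rfl⟩ := ha
      rw [Polynomial.mem_roots hPne]
      exact hrootP i
    have hcardtval : Multiset.card t.val = n := htcard
    have hroots_eq : P.roots = t.val := by
      symm
      apply Multiset.eq_of_le_of_card_le htsub
      calc Multiset.card P.roots ≤ P.natDegree := P.card_roots'
      _ = n := hPdeg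
      _ = Multiset.card t.val := hcardtval.symm
    have hprod : (P.roots.map (fun a => X - C a)).prod = P :=
      prod_multiset_X_sub_C_of_monic_of_roots_card_eq hPmonic
        (by rw [hroots_eq, hcardtval, hPdeg])
    have heval : algebraMap F A (p.coeff 0) = P.coeff 0 := (Polynomial.coeff_map _ 0).symm
    rw [heval, Polynomial.coeff_zero_eq_eval_zero, ← hprod, Polynomial.eval_multiset_prod,
      Multiset.map_map, hroots_eq]
    have hneg : ∀ a : A, (Polynomial.eval 0 ((fun a => X - C a) a)) = -a := by
      intro a
      simp
    have hmapeq : t.val.map (Polynomial.eval 0 ∘ fun a => X - C a) = t.val.map (fun a => -a) := by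
      apply Multiset.map_congr rfl
      intro a _
      exact hneg a
    rw [hmapeq]
    have hfin : (t.val.map (fun a => -a)).prod = ∏ a ∈ t, -a := rfl
    rw [hfin, ht_def, Finset.prod_image (fun a _ b _ h => hrinj h)]
    have : ∀ i : Fin n, -(r i) = (-1) * (x ^ q ^ (i:ℕ)) := by
      intro i
      rw [hr_def]
      ring
    rw [Finset.prod_congr rfl (fun i _ => this i), Finset.prod_mul_distrib,
      Finset.prod_const, Finset.card_univ, Fintype.card_fin,
      Finset.prod_pow_eq_pow_sum, Fin.sum_univ_eq_sum_range, ← hs_def]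
  -- determinant
  have hdet : (Matrix.GeneralLinearGroup.det g : F) = M.det := rfl
  have hdetM : M.det = (-1) ^ n * p.coeff 0 := by
    have hcp : M.charpoly = p := by
      have hdvd2 : p ∣ M.charpoly := minpoly.dvd F M (Matrix.aeval_self_charpoly M)
      have hle : M.charpoly.natDegree ≤ p.natDegree := by
        rw [Matrix.charpoly_natDegree_eq_dim, Fintype.card_fin, hdeg]
      exact Polynomial.eq_of_monic_of_dvd_of_natDegree_le hpmonic (Matrix.charpoly_monic M)
        hdvd2 hle
    rw [Matrix.det_eq_sign_charpoly_coeff, hcp]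
    simp
  have hdetA : algebraMap F A M.det = x ^ s := by
    rw [hdetM, _root_.map_mul, hcoeff, ← mul_assoc, _root_.map_pow, map_neg, _root_.map_one,
      ← mul_pow, neg_mul_neg, mul_one, one_pow, one_mul]
  -- conclude
  have hsdvd : s ∣ k := ⟨q - 1, by rw [hk_def, ← hgeom]; ring⟩
  have hspos : 0 < s := by
    have : s = (∑ i ∈ Finset.range n, q ^ i) := rfl
    have hn0 : 0 < n := hn
    calc 0 < q ^ 0 := by positivity
    _ ≤ s := Finset.single_le_sum (f := fun i => q ^ i) (fun i _ => Nat.zero_le _) (Finset.mem_range.mpr hn0)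
  have hords : orderOf (u0 ^ s) = q - 1 := by
    rw [orderOf_pow, hord, Nat.gcd_eq_right hsdvd, hk_def, ← hgeom, Nat.mul_div_cancel _ hspos]
  set j : Fˣ →* Aˣ := Units.map (algebraMap F A : F →+* A).toMonoidHom with hj_def
  have hjinj : Function.Injective j := Units.map_injective (fun a b hab => (algebraMap F A).injective hab)
  have hjdet : j (Matrix.GeneralLinearGroup.det g) = u0 ^ s := by
    ext
    rw [Units.val_pow_eq_pow_val, hu0val]
    simpa [hj_def] using hdetA
  have hordd : orderOf (Matrix.GeneralLinearGroup.det g) = q - 1 := by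
    rw [← orderOf_injective j hjinj, hjdet, hords]
  intro u
  have htop : Subgroup.zpowers (Matrix.GeneralLinearGroup.det g) = ⊤ := by
    apply Subgroup.eq_top_of_card_eq
    rw [Nat.card_zpowers, hordd, Nat.card_eq_fintype_card, Fintype.card_units, hq]
  rw [htop]
  trivial
end

section
/- If g ∈ GL_n(F_q) stabilizes a nontrivial proper subspace W of F_q^n, then g admits a minimum-length reflection factorization g = t_1 ⋯ t_k (with k = n − dim fix(g)) in which every factor t_i stabilizes W; consequently g is not strongly quasi-Coxeter. -/
open Matrix

def IsReflection {n : ℕ} {F : Type*} [Field F] (t : GL (Fin n) F) : Prop :=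
  t ≠ 1 ∧ ∃ H : Submodule F (Fin n → F), Module.finrank F H = n - 1 ∧
    ∀ v ∈ H, Matrix.mulVec (t : Matrix (Fin n) (Fin n) F) v = v

def fixSpace {n : ℕ} {F : Type*} [Field F] (g : GL (Fin n) F) : Submodule F (Fin n → F) :=
  LinearMap.eqLocus (Matrix.mulVecLin (g : Matrix (Fin n) (Fin n) F)) LinearMap.id

namespace RNSQC

variable {n : ℕ} {F : Type*} [Field F]

abbrev glin (g : GL (Fin n) F) : (Fin n → F) →ₗ[F] (Fin n → F) :=
  Matrix.mulVecLin (g : Matrix (Fin n) (Fin n) F)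

lemma glin_mul (a b : GL (Fin n) F) : glin (a * b) = (glin a).comp (glin b) := by
  simp [glin, Units.val_mul, Matrix.mulVecLin_mul]

lemma glin_one : glin (1 : GL (Fin n) F) = LinearMap.id := by
  simp [glin]

lemma glin_inv_comp (a : GL (Fin n) F) : (glin a⁻¹).comp (glin a) = LinearMap.id := by
  rw [← glin_mul, inv_mul_cancel, glin_one]

lemma glin_injective (a : GL (Fin n) F) : Function.Injective (glin a) := by
  have h : Function.LeftInverse (glin a⁻¹) (glin a) := fun x => by
    have := congrArg (fun f => f x) (glin_inv_comp a); simpa using this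
  exact h.injective

lemma mem_fixSpace {g : GL (Fin n) F} {x : Fin n → F} :
    x ∈ fixSpace g ↔ glin g x = x := Iff.rfl

lemma map_glin_inv {a : GL (Fin n) F} {W : Submodule F (Fin n → F)}
    (h : W.map (glin a) = W) : W.map (glin a⁻¹) = W := by
  conv_lhs => rw [← h]
  rw [← Submodule.map_comp, glin_inv_comp, Submodule.map_id]

lemma map_glin_eq_self {W : Submodule F (Fin n → F)} (u : GL (Fin n) F)
    (h : ∀ x ∈ W, glin u x ∈ W) : W.map (glin u) = W := by
  let e : (Fin n → F) ≃ₗ[F] (Fin n → F) :=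
    LinearEquiv.ofLinear (glin u) (glin u⁻¹)
      (by rw [← glin_mul, mul_inv_cancel, glin_one]) (glin_inv_comp u)
  have hmap : W.map (glin u) = W.map (e : (Fin n → F) →ₗ[F] (Fin n → F)) := rfl
  have hfr : Module.finrank F (W.map (e : (Fin n → F) →ₗ[F] (Fin n → F))) =
      Module.finrank F W := LinearEquiv.finrank_map_eq e W
  refine Submodule.eq_of_le_of_finrank_le ?_ ?_
  · rintro x ⟨y, hy, rfl⟩; exact h y hy
  · rw [hmap, hfr]

lemma comp_aux (φ : Module.Dual F (Fin n → F)) (z : Fin n → F) (a b : F) :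
    (LinearMap.id + (a • φ).smulRight z) * (LinearMap.id + (b • φ).smulRight z) =
      LinearMap.id + ((a + b + a * b * φ z) • φ).smulRight z := by
  apply LinearMap.ext
  intro x
  simp only [Module.End.mul_apply, LinearMap.add_apply, LinearMap.id_apply,
    LinearMap.smulRight_apply, LinearMap.smul_apply, _root_.map_add, _root_.map_smul,
    smul_eq_mul]
  module

lemma exists_unit (φ : Module.Dual F (Fin n → F)) (z : Fin n → F) (h : 1 + φ z ≠ 0) :
    ∃ u : GL (Fin n) F, glin u = LinearMap.id + φ.smulRight z ∧
      glin u⁻¹ = LinearMap.id + ((-(1 + φ z)⁻¹) • φ).smulRight z := by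
  set c : F := -(1 + φ z)⁻¹ with hc
  have hone : (1:F) • φ = φ := one_smul _ _
  have hcoef1 : (1:F) + c + 1 * c * φ z = 0 := by
    rw [hc]; field_simp; ring
  have hcoef2 : c + 1 + c * 1 * φ z = 0 := by
    rw [hc]; field_simp; ring
  have h12 : (LinearMap.id + φ.smulRight z) * (LinearMap.id + (c • φ).smulRight z) = 1 := by
    nth_rewrite 1 [← hone]
    rw [comp_aux, hcoef1]
    simp
    rfl
  have h21 : (LinearMap.id + (c • φ).smulRight z) * (LinearMap.id + φ.smulRight z) = 1 := by
    nth_rewrite 2 [← hone]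
    rw [comp_aux, hcoef2]
    simp
    rfl
  refine ⟨⟨LinearMap.toMatrix' (LinearMap.id + φ.smulRight z),
      LinearMap.toMatrix' (LinearMap.id + (c • φ).smulRight z), ?_, ?_⟩, ?_, ?_⟩
  · rw [← LinearMap.toMatrix'_mul, h12, LinearMap.toMatrix'_one]
  · rw [← LinearMap.toMatrix'_mul, h21, LinearMap.toMatrix'_one]
  · show Matrix.mulVecLin (LinearMap.toMatrix' (LinearMap.id + φ.smulRight z)) = _
    rw [← Matrix.toLin'_apply', Matrix.toLin'_toMatrix']
  · show Matrix.mulVecLin (LinearMap.toMatrix' (LinearMap.id + (c • φ).smulRight z)) = _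
    rw [← Matrix.toLin'_apply', Matrix.toLin'_toMatrix']


lemma exists_dual {M : Type*} [AddCommGroup M] [Module F M] {a b : M}
    (ha : a ≠ 0) (hb : b ≠ 0) :
    ∃ ψ : Module.Dual F M, ψ a = 1 ∧ ψ b ≠ 0 := by
  obtain ⟨ψa, hψa⟩ : ∃ ψ : Module.Dual F M, ψ a ≠ 0 := by
    by_contra h; push_neg at h
    exact ha ((Module.forall_dual_apply_eq_zero_iff F a).mp h)
  obtain ⟨ψb, hψb⟩ : ∃ ψ : Module.Dual F M, ψ b ≠ 0 := by
    by_contra h; push_neg at h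
    exact hb ((Module.forall_dual_apply_eq_zero_iff F b).mp h)
  by_cases hba : ψb a = 0
  · refine ⟨(ψa a)⁻¹ • ψa + ((ψb b)⁻¹ * (1 - (ψa a)⁻¹ * ψa b)) • ψb, ?_, ?_⟩
    · simp only [LinearMap.add_apply, LinearMap.smul_apply, smul_eq_mul, hba]
      rw [mul_zero, add_zero, inv_mul_cancel₀ hψa]
    · simp only [LinearMap.add_apply, LinearMap.smul_apply, smul_eq_mul]
      have : (ψb b)⁻¹ * (1 - (ψa a)⁻¹ * ψa b) * ψb b = 1 - (ψa a)⁻¹ * ψa b := by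
        field_simp
      rw [this]
      simp
  · refine ⟨(ψb a)⁻¹ • ψb, ?_, ?_⟩
    · simp only [LinearMap.smul_apply, smul_eq_mul]
      exact inv_mul_cancel₀ hba
    · simp only [LinearMap.smul_apply, smul_eq_mul]
      exact mul_ne_zero (inv_ne_zero hba) hψb


lemma finrank_V : Module.finrank F (Fin n → F) = n := by
  simp [Module.finrank_pi]

lemma fix_eq_top {g : GL (Fin n) F} (h : fixSpace g = ⊤) : g = 1 := by
  have hid : glin g = LinearMap.id := by
    apply LinearMap.ext; intro x
    exact mem_fixSpace.mp (h ▸ Submodule.mem_top)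
  apply Units.ext
  calc (g : Matrix (Fin n) (Fin n) F)
      = LinearMap.toMatrix' (Matrix.toLin' (g : Matrix (Fin n) (Fin n) F)) :=
        (LinearMap.toMatrix'_toLin' _).symm
    _ = LinearMap.toMatrix' (glin g) := by rw [Matrix.toLin'_apply']
    _ = LinearMap.toMatrix' (LinearMap.id (R := F) (M := Fin n → F)) := by rw [hid]
    _ = 1 := LinearMap.toMatrix'_id
    _ = ((1 : GL (Fin n) F) : Matrix (Fin n) (Fin n) F) := rfl

lemma step (W : Submodule F (Fin n → F)) (g : GL (Fin n) F) (v : Fin n → F)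
    (hv : glin g v ≠ v)
    (hWv : glin g v - v ∈ W ∨ W ≤ fixSpace g) :
    ∃ t : GL (Fin n) F, IsReflection t ∧ W.map (glin t) = W ∧
      W.map (glin t⁻¹) = W ∧
      Module.finrank F (fixSpace (t⁻¹ * g)) = Module.finrank F (fixSpace g) + 1 := by
  classical
  set U := fixSpace g with hU
  have hvU : v ∉ U := fun h => hv (mem_fixSpace.mp h)
  have hv0 : v ≠ 0 := fun h => hv (by rw [h]; exact map_zero _)
  have hgvU : glin g v ∉ U := by
    intro h
    exact hv (glin_injective g (mem_fixSpace.mp h))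
  have hπv : U.mkQ v ≠ 0 := by
    simpa [Submodule.mkQ_apply, Submodule.Quotient.mk_eq_zero] using hvU
  have hπgv : U.mkQ (glin g v) ≠ 0 := by
    simpa [Submodule.mkQ_apply, Submodule.Quotient.mk_eq_zero] using hgvU
  obtain ⟨ψ, hψ1, hψ2⟩ := exists_dual (F := F) hπgv hπv
  set φ : Module.Dual F (Fin n → F) := ψ.comp U.mkQ with hφdef
  have hφU : ∀ x ∈ U, φ x = 0 := fun x hx => by
    simp [hφdef, (Submodule.Quotient.mk_eq_zero U).mpr hx]
  have hφgv : φ (glin g v) = 1 := hψ1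
  have hφv : φ v ≠ 0 := hψ2
  set w : Fin n → F := glin g v - v with hw
  have hφw : (-φ) w = φ v - 1 := by
    simp only [LinearMap.neg_apply, hw, map_sub, hφgv]; ring
  have hcond : 1 + (-φ) w ≠ 0 := by
    rw [hφw]
    have : 1 + (φ v - 1) = φ v := by ring
    rw [this]; exact hφv
  obtain ⟨u, hu, hu'⟩ := exists_unit (-φ) w hcond
  -- generic form
  set ρ : F → ((Fin n → F) →ₗ[F] (Fin n → F)) :=
    fun a => LinearMap.id + (a • φ).smulRight w with hρ
  have hu2 : glin u = ρ (-1) := by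
    apply LinearMap.ext; intro x
    rw [hu]
    simp only [hρ, LinearMap.add_apply, LinearMap.id_apply, LinearMap.smulRight_apply,
      LinearMap.smul_apply, LinearMap.neg_apply, smul_eq_mul, neg_mul, one_mul, neg_smul]
  have hu'2 : glin u⁻¹ = ρ ((1 + (-φ) w)⁻¹) := by
    rw [hu', hρ]
    congr 1
    rw [neg_smul_neg]
  have ρfix : ∀ (a : F) (x : Fin n → F), φ x = 0 → ρ a x = x := by
    intro a x hx
    simp [hρ, hx]
  have ρW : ∀ (a : F), ∀ x ∈ W, ρ a x ∈ W := by
    intro a x hx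
    rcases hWv with hwW | hWU
    · exact W.add_mem hx (W.smul_mem _ hwW)
    · rw [ρfix a x (hφU x (hWU hx))]; exact hx
  have hσgv : glin u (glin g v) = v := by
    rw [hu2, hρ]
    simp only [LinearMap.add_apply, LinearMap.id_apply, LinearMap.smulRight_apply,
      LinearMap.smul_apply, hφgv, smul_eq_mul, hw]
    module
  set t := u⁻¹ with ht
  have htinv : t⁻¹ = u := inv_inv u
  -- rank of ker φ
  have hrange : LinearMap.range φ = ⊤ := by
    rw [eq_top_iff]
    rintro c -
    refine ⟨c • glin g v, ?_⟩
    rw [_root_.map_smul, hφgv, smul_eq_mul, mul_one]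
  have hkerrank : 1 + Module.finrank F (LinearMap.ker φ) = n := by
    have h1 := LinearMap.finrank_range_add_finrank_ker φ
    rw [hrange, finrank_top, Module.finrank_self, finrank_V] at h1
    exact h1
  have hn1 : 1 ≤ n := by omega
  -- reflection
  have hrefl : IsReflection t := by
    constructor
    · intro h1
      rw [ht, inv_eq_one] at h1
      rw [h1, glin_one, LinearMap.id_apply] at hσgv
      exact hv hσgv
    · refine ⟨LinearMap.ker φ, by omega, ?_⟩
      intro x hx
      rw [← Matrix.mulVecLin_apply]
      show glin t x = x
      rw [hu'2]
      exact ρfix _ x hx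
  -- stabilization
  have htW : W.map (glin t) = W := map_glin_eq_self t (fun x hx => by
    rw [hu'2]; exact ρW _ x hx)
  have htWinv : W.map (glin t⁻¹) = W := by
    rw [htinv]
    exact map_glin_eq_self u (fun x hx => by rw [hu2]; exact ρW _ x hx)
  -- rank computation
  have hg'app : ∀ x, glin (t⁻¹ * g) x = glin u (glin g x) := by
    intro x; rw [htinv, glin_mul]; rfl
  have hlow : U ⊔ (F ∙ v) ≤ fixSpace (t⁻¹ * g) := by
    apply sup_le
    · intro x hx
      rw [mem_fixSpace, hg'app, mem_fixSpace.mp hx, hu2]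
      exact ρfix _ x (hφU x hx)
    · rw [Submodule.span_le, Set.singleton_subset_iff]
      rw [SetLike.mem_coe, mem_fixSpace, hg'app]
      exact hσgv
  have hinf : U ⊓ (F ∙ v) = ⊥ := by
    rw [eq_bot_iff]
    rintro x ⟨hxU, hxs⟩
    obtain ⟨c, rfl⟩ := Submodule.mem_span_singleton.mp hxs
    rcases eq_or_ne c 0 with rfl | hc
    · simp
    · exfalso
      apply hvU
      have := U.smul_mem c⁻¹ hxU
      rwa [smul_smul, inv_mul_cancel₀ hc, one_smul] at this
  have hdsup : Module.finrank F ((U ⊔ (F ∙ v) : Submodule F (Fin n → F))) =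
      Module.finrank F U + 1 := by
    have h1 := Submodule.finrank_sup_add_finrank_inf_eq U (F ∙ v)
    rw [hinf, finrank_bot, finrank_span_singleton hv0] at h1
    omega
  have hle1 : Module.finrank F U + 1 ≤ Module.finrank F (fixSpace (t⁻¹ * g)) := by
    rw [← hdsup]
    exact Submodule.finrank_mono hlow
  have hmul : fixSpace t ⊓ fixSpace (t⁻¹ * g) ≤ fixSpace g := by
    rintro x ⟨h1x, h2x⟩
    rw [mem_fixSpace]
    have : g = t * (t⁻¹ * g) := (mul_inv_cancel_left t g).symm
    rw [this, glin_mul, LinearMap.comp_apply, mem_fixSpace.mp h2x, mem_fixSpace.mp h1x]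
  have hker_t : LinearMap.ker φ ≤ fixSpace t := by
    intro x hx
    rw [mem_fixSpace, hu'2]
    exact ρfix _ x hx
  have h3 : Module.finrank F (LinearMap.ker φ) ≤ Module.finrank F (fixSpace t) :=
    Submodule.finrank_mono hker_t
  have h4 := Submodule.finrank_sup_add_finrank_inf_eq (fixSpace t) (fixSpace (t⁻¹ * g))
  have h5 : Module.finrank F ((fixSpace t ⊔ fixSpace (t⁻¹ * g) : Submodule F (Fin n → F))) ≤ n := by
    have := Submodule.finrank_le (fixSpace t ⊔ fixSpace (t⁻¹ * g))
    rwa [finrank_V] at this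
  have h6 : Module.finrank F ((fixSpace t ⊓ fixSpace (t⁻¹ * g) : Submodule F (Fin n → F))) ≤
      Module.finrank F U := Submodule.finrank_mono hmul
  exact ⟨t, hrefl, htW, htWinv, by omega⟩

lemma key (W : Submodule F (Fin n → F)) :
    ∀ (k : ℕ) (g : GL (Fin n) F), n - Module.finrank F (fixSpace g) = k →
      W.map (glin g) = W →
      ∃ l : List (GL (Fin n) F), l.length = k ∧ (∀ t ∈ l, IsReflection t) ∧
        l.prod = g ∧ ∀ t ∈ l, W.map (glin t) = W := by
  intro k
  induction k with
  | zero =>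
    intro g hk _
    have h1 : Module.finrank F (fixSpace g) ≤ n := by
      have := Submodule.finrank_le (fixSpace g)
      rwa [finrank_V] at this
    have hd : Module.finrank F (fixSpace g) = n := by omega
    have htop : fixSpace g = ⊤ :=
      Submodule.eq_top_of_finrank_eq (by rw [hd, finrank_V])
    exact ⟨[], rfl, by simp, by rw [List.prod_nil, fix_eq_top htop], by simp⟩
  | succ k ih =>
    intro g hk hW
    have hne : fixSpace g ≠ ⊤ := by
      intro h
      rw [h, finrank_top, finrank_V, Nat.sub_self] at hk
      exact Nat.succ_ne_zero k hk.symm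
    obtain ⟨v, hv, hWv⟩ : ∃ v, glin g v ≠ v ∧ (glin g v - v ∈ W ∨ W ≤ fixSpace g) := by
      by_cases hWfix : ∀ x ∈ W, glin g x = x
      · obtain ⟨v, hv⟩ : ∃ v, glin g v ≠ v := by
          by_contra h; push_neg at h
          exact hne (Submodule.eq_top_iff'.mpr fun x => mem_fixSpace.mpr (h x))
        exact ⟨v, hv, Or.inr fun x hx => mem_fixSpace.mpr (hWfix x hx)⟩
      · push_neg at hWfix
        obtain ⟨v, hvW, hv⟩ := hWfix
        refine ⟨v, hv, Or.inl (W.sub_mem ?_ hvW)⟩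
        rw [← hW]
        exact Submodule.mem_map_of_mem hvW
    obtain ⟨t, hrefl, htW, htWinv, hfr⟩ := step W g v hv hWv
    have hW' : W.map (glin (t⁻¹ * g)) = W := by
      rw [glin_mul, Submodule.map_comp, hW, htWinv]
    have h7 : Module.finrank F (fixSpace (t⁻¹ * g)) ≤ n := by
      have := Submodule.finrank_le (fixSpace (t⁻¹ * g))
      rwa [finrank_V] at this
    have harith : n - Module.finrank F (fixSpace (t⁻¹ * g)) = k := by omega
    obtain ⟨l, hl1, hl2, hl3, hl4⟩ := ih (t⁻¹ * g) harith hW'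
    refine ⟨t :: l, by simp [hl1], ?_, ?_, ?_⟩
    · intro s hs
      rcases List.mem_cons.mp hs with rfl | hs
      · exact hrefl
      · exact hl2 s hs
    · rw [List.prod_cons, hl3, mul_inv_cancel_left]
    · intro s hs
      rcases List.mem_cons.mp hs with rfl | hs
      · exact htW
      · exact hl4 s hs


def stabGL (W : Submodule F (Fin n → F)) : Subgroup (GL (Fin n) F) where
  carrier := {u | W.map (glin u) = W}
  mul_mem' := by
    intro a b ha hb
    simp only [Set.mem_setOf_eq] at *
    rw [glin_mul, Submodule.map_comp, hb, ha]
  one_mem' := by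
    simp only [Set.mem_setOf_eq, glin_one, Submodule.map_id]
  inv_mem' := by
    intro a ha
    simp only [Set.mem_setOf_eq] at *
    exact map_glin_inv ha

lemma mem_stabGL {W : Submodule F (Fin n → F)} {u : GL (Fin n) F} :
    u ∈ stabGL W ↔ W.map (glin u) = W := Iff.rfl

lemma exists_nonstab (W : Submodule F (Fin n → F)) (hW0 : W ≠ ⊥) (hWtop : W ≠ ⊤) :
    ∃ u : GL (Fin n) F, W.map (glin u) ≠ W := by
  obtain ⟨w₀, hw₀W, hw₀⟩ := Submodule.exists_mem_ne_zero_of_ne_bot hW0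
  obtain ⟨v₀, hv₀⟩ : ∃ v, v ∉ W := by
    by_contra h; push_neg at h
    exact hWtop (Submodule.eq_top_iff'.mpr h)
  obtain ⟨ψ, hψ1, -⟩ := exists_dual (F := F) (M := Fin n → F) hw₀ hw₀
  by_cases hc : ψ v₀ = -1
  · -- use z = v₀ + w₀
    have hz : 1 + ψ (v₀ + w₀) ≠ 0 := by
      rw [map_add, hc, hψ1]
      norm_num
    obtain ⟨u, hu, -⟩ := exists_unit ψ (v₀ + w₀) hz
    refine ⟨u, fun heq => ?_⟩
    have hmem : glin u w₀ ∈ W := heq ▸ Submodule.mem_map_of_mem hw₀W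
    rw [hu] at hmem
    simp only [LinearMap.add_apply, LinearMap.id_apply, LinearMap.smulRight_apply, hψ1,
      one_smul] at hmem
    have : v₀ ∈ W := by
      have h2 := W.sub_mem hmem hw₀W
      have h3 : w₀ + (v₀ + w₀) - w₀ = v₀ + w₀ := by abel
      rw [h3] at h2
      have h4 := W.sub_mem h2 hw₀W
      rwa [add_sub_cancel_right] at h4
    exact hv₀ this
  · have hz : 1 + ψ v₀ ≠ 0 := by
      intro h
      apply hc
      linear_combination h
    obtain ⟨u, hu, -⟩ := exists_unit ψ v₀ hz
    refine ⟨u, fun heq => ?_⟩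
    have hmem : glin u w₀ ∈ W := heq ▸ Submodule.mem_map_of_mem hw₀W
    rw [hu] at hmem
    simp only [LinearMap.add_apply, LinearMap.id_apply, LinearMap.smulRight_apply, hψ1,
      one_smul] at hmem
    have h4 := W.sub_mem hmem hw₀W
    rw [add_sub_cancel_left] at h4
    exact hv₀ h4

end RNSQC

theorem reducible_not_strongly_quasi_coxeter
    (q n : ℕ) (hn : 1 ≤ n) (F : Type*) [Field F] [Fintype F] (hq : Fintype.card F = q)
    (g : GL (Fin n) F) (W : Submodule F (Fin n → F)) (hW0 : W ≠ ⊥) (hWtop : W ≠ ⊤)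
    (hstab : W.map (Matrix.mulVecLin (g : Matrix (Fin n) (Fin n) F)) = W) :
    (∃ l : List (GL (Fin n) F),
        l.length = n - Module.finrank F (fixSpace g) ∧
        (∀ t ∈ l, IsReflection t) ∧ l.prod = g ∧
        ∀ t ∈ l, W.map (Matrix.mulVecLin (t : Matrix (Fin n) (Fin n) F)) = W) ∧
    ¬ (∀ l : List (GL (Fin n) F),
        l.length = n - Module.finrank F (fixSpace g) →
        (∀ t ∈ l, IsReflection t) → l.prod = g →
        Subgroup.closure {t | t ∈ l} = (⊤ : Subgroup (GL (Fin n) F))) := by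
  obtain ⟨l, hl1, hl2, hl3, hl4⟩ :=
    RNSQC.key W (n - Module.finrank F (fixSpace g)) g rfl hstab
  refine ⟨⟨l, hl1, hl2, hl3, hl4⟩, fun hall => ?_⟩
  have hcl := hall l hl1 hl2 hl3
  obtain ⟨u, hu⟩ := RNSQC.exists_nonstab W hW0 hWtop
  apply hu
  have hle : Subgroup.closure {t | t ∈ l} ≤ RNSQC.stabGL W :=
    (Subgroup.closure_le _).mpr (fun t ht => hl4 t ht)
  have : u ∈ Subgroup.closure {t | t ∈ l} := by rw [hcl]; trivial
  exact RNSQC.mem_stabGL.mp (hle this)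
end
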